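/- Suppose O has a maxdeg_W border and I ⊂ P is a homogeneous zero-dimensional ideal with O-border basis g_j = b_j − Σ_i c_{ij} t_i. Let J ⊂ K[z][x_1,…,x_n] be generated by the polynomials b_j − Σ_i c_{ij} z t_i. Then K[z] → K[z][x_1,…,x_n]/J is flat with free basis the residue classes of O, the specialization z ↦ 1 gives P/I, and the specialization z ↦ 0 gives P/(b_1,…,b_ν). -/

import Mathlib

open MvPolynomial Finsupp

open scoped Classical

/-- The border of a finite set of monomials (represented as exponent vectors). -/
noncomputable def borderSet (n : ℕ) (O : Finset (Fin n →₀ ℕ)) : Finset (Fin n →₀ ℕ) :=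
  (O.biUnion (fun t => Finset.image (fun k => t + Finsupp.single k 1) Finset.univ)) \ O

/-- The `W`-degree of a monomial with respect to the weights `w`. -/
def degW (n : ℕ) (w : Fin n → ℕ) (m : Fin n →₀ ℕ) : ℕ := ∑ i, w i * m i

section Aux

variable {n : ℕ}

lemma degW_add (w : Fin n → ℕ) (u v : Fin n →₀ ℕ) :
    degW n w (u + v) = degW n w u + degW n w v := by
  simp [degW, Finsupp.add_apply, mul_add, Finset.sum_add_distrib]

lemma degW_pos (w : Fin n → ℕ) (hw : ∀ i, 0 < w i) {u : Fin n →₀ ℕ} (hu : u ≠ 0) :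
    0 < degW n w u := by
  obtain ⟨i, hi⟩ : ∃ i, u i ≠ 0 := by
    by_contra h; push_neg at h; exact hu (Finsupp.ext fun i => h i)
  calc 0 < w i * u i := Nat.mul_pos (hw i) (Nat.pos_of_ne_zero hi)
    _ ≤ ∑ j, w j * u j := Finset.single_le_sum (f := fun j => w j * u j) (fun j _ => Nat.zero_le _) (Finset.mem_univ i)

lemma borderSet_not_mem {O : Finset (Fin n →₀ ℕ)} {b : Fin n →₀ ℕ}
    (hb : b ∈ borderSet n O) : b ∉ O := (Finset.mem_sdiff.mp hb).2

/-- walking lemma: a monomial `s + u` outside `O` (with `s ∈ O`) can be written as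
`b + u'` with `b` in the border and `u'` strictly smaller than `u`. -/
lemma walk (O : Finset (Fin n →₀ ℕ)) (N : ℕ) :
    ∀ u s : Fin n →₀ ℕ, (∑ i, u i) = N → s ∈ O → s + u ∉ O →
      ∃ b ∈ borderSet n O, ∃ u' : Fin n →₀ ℕ, (∑ i, u' i) < N ∧ b + u' = s + u := by
  induction N using Nat.strong_induction_on with
  | _ N ih =>
  intro u s hN hs hns
  have hu : u ≠ 0 := by rintro rfl; rw [add_zero] at hns; exact hns hs
  obtain ⟨i, hi⟩ : ∃ i, u i ≠ 0 := by
    by_contra h; push_neg at h; exact hu (Finsupp.ext fun i => h i)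
  set u₁ := u - Finsupp.single i 1 with hu₁
  have hle : Finsupp.single i 1 ≤ u :=
    Finsupp.single_le_iff.mpr (Nat.one_le_iff_ne_zero.mpr hi)
  have hsum : u₁ + Finsupp.single i 1 = u := tsub_add_cancel_of_le hle
  have hN₁ : (∑ j, u₁ j) + 1 = N := by
    have h1 := congrArg (fun v : Fin n →₀ ℕ => ∑ j, v j) hsum
    simp only [Finsupp.add_apply, Finset.sum_add_distrib] at h1
    have h2 : (∑ j, Finsupp.single i 1 j) = 1 := by
      simp [Finsupp.single_apply]
    rw [h2] at h1
    omega
  have hkey : (s + Finsupp.single i 1) + u₁ = s + u := by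
    rw [add_assoc, add_comm (Finsupp.single i 1) u₁, hsum]
  by_cases h2 : s + Finsupp.single i 1 ∈ O
  · obtain ⟨b, hb, u', hlt, heq⟩ :=
      ih (∑ j, u₁ j) (by omega) u₁ (s + Finsupp.single i 1) rfl h2 (by rwa [hkey])
    exact ⟨b, hb, u', by omega, by rw [heq, hkey]⟩
  · refine ⟨s + Finsupp.single i 1, ?_, u₁, by omega, hkey⟩
    refine Finset.mem_sdiff.mpr ⟨Finset.mem_biUnion.mpr ⟨s, hs, ?_⟩, h2⟩
    exact Finset.mem_image.mpr ⟨i, Finset.mem_univ i, rfl⟩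

/-- coefficient of a border prebasis element -/
lemma coeff_gen {R : Type*} [CommRing R] (O : Finset (Fin n →₀ ℕ))
    {b : Fin n →₀ ℕ} (hb : b ∉ O) (γ : (Fin n →₀ ℕ) → R) (m : Fin n →₀ ℕ) :
    coeff m ((monomial b 1 - ∑ t ∈ O, MvPolynomial.C (γ t) * monomial t 1 :
        MvPolynomial (Fin n) R)) =
      (if b = m then 1 else 0) - (if m ∈ O then γ m else 0) := by
  rw [coeff_sub, coeff_monomial]
  congr 1
  rw [coeff_sum]
  simp_rw [MvPolynomial.C_mul_monomial, mul_one, coeff_monomial]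
  exact Finset.sum_ite_eq' O m γ

/-- reduction lemma: every monomial of the form `s + u` with `s ∈ O` lies in the sum of
the ideal generated by a border prebasis and the `R`-span of the monomials of `O`. -/
lemma red {R : Type*} [CommRing R] (O : Finset (Fin n →₀ ℕ))
    (γ : (Fin n →₀ ℕ) → (Fin n →₀ ℕ) → R) (N : ℕ) :
    ∀ u s : Fin n →₀ ℕ, (∑ i, u i) = N → s ∈ O →
      (monomial (s + u) (1 : R) : MvPolynomial (Fin n) R) ∈
        (Ideal.span {p | ∃ b ∈ borderSet n O,
            p = monomial b 1 - ∑ t ∈ O, MvPolynomial.C (γ b t) * monomial t 1}).restrictScalars R ⊔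
          Submodule.span R {p : MvPolynomial (Fin n) R | ∃ t ∈ O, p = monomial t 1} := by
  induction N using Nat.strong_induction_on with
  | _ N ih =>
  intro u s hN hs
  by_cases h : s + u ∈ O
  · exact Submodule.mem_sup_right (Submodule.subset_span ⟨s + u, h, rfl⟩)
  · obtain ⟨b, hb, u', hlt, heq⟩ := walk O N u s hN hs h
    have hgen : (monomial b 1 - ∑ t ∈ O, MvPolynomial.C (γ b t) * monomial t 1 :
        MvPolynomial (Fin n) R) ∈ Ideal.span {p | ∃ b ∈ borderSet n O,
          p = monomial b 1 - ∑ t ∈ O, MvPolynomial.C (γ b t) * monomial t 1} :=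
      Ideal.subset_span ⟨b, hb, rfl⟩
    have hmul : ∀ t : Fin n →₀ ℕ, (monomial u' (1 : R) : MvPolynomial (Fin n) R) *
        (MvPolynomial.C (γ b t) * monomial t 1) = MvPolynomial.C (γ b t) * monomial (t + u') 1 := by
      intro t
      rw [mul_left_comm, monomial_mul, one_mul, add_comm u' t]
    have key : (monomial (s + u) (1 : R) : MvPolynomial (Fin n) R)
        = monomial u' 1 * (monomial b 1 - ∑ t ∈ O, MvPolynomial.C (γ b t) * monomial t 1)
          + ∑ t ∈ O, MvPolynomial.C (γ b t) * monomial (t + u') 1 := by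
      rw [mul_sub, Finset.mul_sum]
      simp_rw [hmul]
      rw [sub_add_cancel, monomial_mul, one_mul, add_comm u' b, heq]
    rw [key]
    refine Submodule.add_mem _ (Submodule.mem_sup_left ?_) (Submodule.sum_mem _ fun t ht => ?_)
    · exact Ideal.mul_mem_left _ _ hgen
    · have h1 := ih (∑ i, u' i) (by omega) u' t rfl ht
      rw [← MvPolynomial.smul_eq_C_mul]
      exact Submodule.smul_mem _ _ h1

/-- every polynomial lies in the sum of the prebasis ideal and the span of `O`-monomials. -/
lemma mem_sup_all {R : Type*} [CommRing R] (O : Finset (Fin n →₀ ℕ))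
    (h0 : (0 : Fin n →₀ ℕ) ∈ O) (γ : (Fin n →₀ ℕ) → (Fin n →₀ ℕ) → R)
    (f : MvPolynomial (Fin n) R) :
    f ∈ (Ideal.span {p | ∃ b ∈ borderSet n O,
            p = monomial b 1 - ∑ t ∈ O, MvPolynomial.C (γ b t) * monomial t 1}).restrictScalars R ⊔
          Submodule.span R {p : MvPolynomial (Fin n) R | ∃ t ∈ O, p = monomial t 1} := by
  rw [← support_sum_monomial_coeff f]
  refine Submodule.sum_mem _ fun m hm => ?_
  have h2 := red O γ (∑ i, m i) m 0 rfl h0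
  rw [zero_add] at h2
  have h3 : (monomial m (coeff m f) : MvPolynomial (Fin n) R)
      = (coeff m f) • monomial m 1 := by
    rw [MvPolynomial.smul_monomial, smul_eq_mul, mul_one]
  rw [h3]
  exact Submodule.smul_mem _ _ h2


/-- homogeneity: the coefficients of a homogeneous border basis vanish unless degrees agree. -/
lemma cvanish {K : Type*} [Field K] (w : Fin n → ℕ)
    (O : Finset (Fin n →₀ ℕ))
    (I : Ideal (MvPolynomial (Fin n) K))
    (hIhom : ∀ f ∈ I, ∀ d : ℕ,
      (∑ m ∈ f.support.filter (fun m => degW n w m = d), monomial m (coeff m f)) ∈ I)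
    (c : (Fin n →₀ ℕ) → (Fin n →₀ ℕ) → K)
    (hmem : ∀ b ∈ borderSet n O,
      (monomial b 1 - ∑ t ∈ O, MvPolynomial.C (c b t) * monomial t 1 :
        MvPolynomial (Fin n) K) ∈ I)
    (hcompl : Disjoint (Submodule.restrictScalars K I)
      (Submodule.span K {p : MvPolynomial (Fin n) K | ∃ t ∈ O, p = monomial t 1}))
    {b : Fin n →₀ ℕ} (hb : b ∈ borderSet n O) {t : Fin n →₀ ℕ} (ht : t ∈ O)
    (hd : degW n w t ≠ degW n w b) : c b t = 0 := by
  set g : MvPolynomial (Fin n) K :=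
    monomial b 1 - ∑ t ∈ O, MvPolynomial.C (c b t) * monomial t 1 with hg
  have hbO : b ∉ O := borderSet_not_mem hb
  have hgI : g ∈ I := hmem b hb
  set d : ℕ := degW n w t with hdt
  set h : MvPolynomial (Fin n) K :=
    ∑ m ∈ g.support.filter (fun m => degW n w m = d), monomial m (coeff m g) with hh
  have hhI : h ∈ I := hIhom g hgI d
  have hcoeffg : ∀ m, coeff m g = (if b = m then 1 else 0) - (if m ∈ O then c b m else 0) :=
    coeff_gen O hbO (c b)
  have hhspan : h ∈ Submodule.span K
      {p : MvPolynomial (Fin n) K | ∃ t ∈ O, p = monomial t 1} := by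
    refine Submodule.sum_mem _ fun m hm => ?_
    rw [Finset.mem_filter] at hm
    have hmb : m ≠ b := by
      rintro rfl
      exact hd (hm.2.symm)
    have hmO : m ∈ O := by
      by_contra hmO
      have : coeff m g = 0 := by
        rw [hcoeffg m, if_neg (fun h => hmb h.symm), if_neg hmO, sub_zero]
      exact (MvPolynomial.mem_support_iff.mp hm.1) this
    have : (monomial m (coeff m g) : MvPolynomial (Fin n) K) = (coeff m g) • monomial m 1 := by
      rw [MvPolynomial.smul_monomial, smul_eq_mul, mul_one]
    rw [this]
    exact Submodule.smul_mem _ _ (Submodule.subset_span ⟨m, hmO, rfl⟩)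
  have hzero : h = 0 := by
    have := Submodule.disjoint_def.mp hcompl h hhI hhspan
    exact this
  -- now extract the coefficient of t
  have hct : coeff t g = 0 := by
    by_cases hts : t ∈ g.support.filter (fun m => degW n w m = d)
    · have h1 : coeff t h = coeff t g := by
        rw [hh, coeff_sum]
        simp_rw [coeff_monomial]
        rw [Finset.sum_ite_eq' _ t (fun m => coeff m g), if_pos hts]
      rw [hzero] at h1
      simpa using h1.symm
    · by_contra hne
      exact hts (Finset.mem_filter.mpr ⟨MvPolynomial.mem_support_iff.mpr hne, rfl⟩)
  rw [hcoeffg t, if_neg (fun h => hd (by rw [h])), if_pos ht, zero_sub, neg_eq_zero] at hct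
  exact hct

/-- key coefficient lemma: for `m` of degree at most every border degree,
the coefficient of `m` in `q * g_b` only involves the constant term of `q`. -/
lemma coeff_mul_gen {R : Type*} [CommRing R] (w : Fin n → ℕ) (hw : ∀ i, 0 < w i)
    (O : Finset (Fin n →₀ ℕ)) {b : Fin n →₀ ℕ} (hb : b ∉ O)
    (γ : (Fin n →₀ ℕ) → R) (hγ : ∀ v ∈ O, degW n w v ≠ degW n w b → γ v = 0)
    (q : MvPolynomial (Fin n) R) {m : Fin n →₀ ℕ} (hm : degW n w m ≤ degW n w b) :
    coeff m (q * (monomial b 1 - ∑ t ∈ O, MvPolynomial.C (γ t) * monomial t 1)) =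
      coeff 0 q * coeff m (monomial b 1 - ∑ t ∈ O, MvPolynomial.C (γ t) * monomial t 1) := by
  rw [coeff_mul]
  refine Finset.sum_eq_single (0, m) ?_ ?_
  · rintro ⟨u, v⟩ hp hne
    rw [Finset.HasAntidiagonal.mem_antidiagonal] at hp
    have hu : u ≠ 0 := by
      rintro rfl
      rw [zero_add] at hp
      exact hne (Prod.ext rfl hp)
    have hdv : degW n w v < degW n w b := by
      have h1 : degW n w u + degW n w v = degW n w m := by rw [← degW_add, hp]
      have h2 := degW_pos w hw hu
      omega
    have hzero : coeff v (monomial b 1 - ∑ t ∈ O, MvPolynomial.C (γ t) * monomial t 1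
        : MvPolynomial (Fin n) R) = 0 := by
      rw [coeff_gen O hb γ v, if_neg (fun h => absurd hdv (by rw [h]; exact lt_irrefl _))]
      by_cases h2 : v ∈ O
      · rw [if_pos h2, hγ v h2 (Nat.ne_of_lt hdv), zero_sub, neg_zero]
      · rw [if_neg h2, sub_zero]
    rw [hzero, mul_zero]
  · intro h
    exact absurd (Finset.HasAntidiagonal.mem_antidiagonal.mpr (zero_add m)) h

end Aux

set_option maxHeartbeats 2000000 in
set_option synthInstance.maxHeartbeats 1000000 in
/-- **Homogeneous maxdeg border bases give flat deformations to the border term ideal.**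
If `O` has a `maxdeg_W` border and the homogeneous ideal `I` has the `O`-border basis
`g_b = b − Σ_t c_{t,b} t`, then for the ideal `J ⊆ K[z][x_1,…,x_n]` generated by the
polynomials `b − Σ_t c_{t,b} z t`: the residue classes of the terms of `O` form a free
`K[z]`-module basis of `K[z][x_1,…,x_n]/J` (so `K[z] → K[z][x]/J` is flat), the specialization
`z ↦ 1` of `J` is `I`, and the specialization `z ↦ 0` of `J` is the border term ideal
`(b_1,…,b_ν)`. -/
theorem maxdeg_homogeneous_deformation (K : Type*) [Field K] (n : ℕ)
    (w : Fin n → ℕ) (hw : ∀ i, 0 < w i)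
    (O : Finset (Fin n →₀ ℕ)) (h0 : (0 : Fin n →₀ ℕ) ∈ O)
    (hO : ∀ t ∈ O, ∀ s : Fin n →₀ ℕ, s ≤ t → s ∈ O)
    (hmax : ∀ t ∈ O, ∀ b ∈ borderSet n O, degW n w t ≤ degW n w b)
    (I : Ideal (MvPolynomial (Fin n) K))
    (hIhom : ∀ f ∈ I, ∀ d : ℕ,
      (∑ m ∈ f.support.filter (fun m => degW n w m = d), monomial m (coeff m f)) ∈ I)
    (c : (Fin n →₀ ℕ) → (Fin n →₀ ℕ) → K)
    (hmem : ∀ b ∈ borderSet n O,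
      (monomial b 1 - ∑ t ∈ O, MvPolynomial.C (c b t) * monomial t 1 :
        MvPolynomial (Fin n) K) ∈ I)
    (hcompl : IsCompl (Submodule.restrictScalars K I)
      (Submodule.span K {p : MvPolynomial (Fin n) K | ∃ t ∈ O, p = monomial t 1}))
    (J : Ideal (MvPolynomial (Fin n) (Polynomial K)))
    (hJ : J = Ideal.span {p | ∃ b ∈ borderSet n O,
      p = monomial b 1 -
        ∑ t ∈ O, MvPolynomial.C (Polynomial.C (c b t) * Polynomial.X) * monomial t 1}) :
    LinearIndependent (Polynomial K)
      (fun t : ↥O => Ideal.Quotient.mk J (monomial (t : Fin n →₀ ℕ) (1 : Polynomial K))) ∧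
    Submodule.span (Polynomial K)
      (Set.range (fun t : ↥O => Ideal.Quotient.mk J
        (monomial (t : Fin n →₀ ℕ) (1 : Polynomial K)))) = ⊤ ∧
    Ideal.map (MvPolynomial.map (Polynomial.evalRingHom (1 : K))) J = I ∧
    Ideal.map (MvPolynomial.map (Polynomial.evalRingHom (0 : K))) J =
      Ideal.span {p : MvPolynomial (Fin n) K | ∃ b ∈ borderSet n O, p = monomial b 1} := by
  have smul_mk : ∀ (a : Polynomial K) (p : MvPolynomial (Fin n) (Polynomial K)),
      Ideal.Quotient.mk J (a • p) = a • Ideal.Quotient.mk J p := by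
    intro a p
    rw [← Ideal.Quotient.mkₐ_eq_mk (Polynomial K) J]
    exact map_smul (Ideal.Quotient.mkₐ (Polynomial K) J) a p
  have hcv : ∀ {b : Fin n →₀ ℕ}, b ∈ borderSet n O → ∀ {t : Fin n →₀ ℕ}, t ∈ O →
      degW n w t ≠ degW n w b → c b t = 0 :=
    by intro b hb t ht hd; exact cvanish w O I hIhom c hmem hcompl.disjoint hb ht hd
  have hγ : ∀ b ∈ borderSet n O, ∀ v ∈ O, degW n w v ≠ degW n w b →
      Polynomial.C (c b v) * Polynomial.X = (0 : Polynomial K) := by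
    intro b hb v hv hne
    rw [hcv hb hv hne, map_zero, zero_mul]
  have mapkg1 : ∀ b, MvPolynomial.map (Polynomial.evalRingHom (1 : K))
      (monomial b 1 - ∑ t ∈ O, MvPolynomial.C (Polynomial.C (c b t) * Polynomial.X) *
        monomial t 1 : MvPolynomial (Fin n) (Polynomial K))
      = monomial b 1 - ∑ t ∈ O, MvPolynomial.C (c b t) * monomial t 1 := by
    intro b
    rw [map_sub, map_sum]
    simp [MvPolynomial.map_monomial, MvPolynomial.map_C]
  have mapkg0 : ∀ b, MvPolynomial.map (Polynomial.evalRingHom (0 : K))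
      (monomial b 1 - ∑ t ∈ O, MvPolynomial.C (Polynomial.C (c b t) * Polynomial.X) *
        monomial t 1 : MvPolynomial (Fin n) (Polynomial K))
      = monomial b 1 := by
    intro b
    rw [map_sub, map_sum]
    simp [MvPolynomial.map_monomial, MvPolynomial.map_C]
  refine ⟨?_, ?_, ?_, ?_⟩
  · -- linear independence
    rw [linearIndependent_iff]
    intro l hl
    set F : MvPolynomial (Fin n) (Polynomial K) :=
      l.sum fun t a => monomial (↑t) a with hF
    have hcoeffF : ∀ m : Fin n →₀ ℕ,
        coeff m F = ∑ t ∈ l.support, (if (↑t : Fin n →₀ ℕ) = m then l t else 0) := by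
      intro m
      rw [hF, Finsupp.sum, coeff_sum]
      simp_rw [coeff_monomial]
    have hFt : ∀ t₀ : ↥O, coeff (↑t₀ : Fin n →₀ ℕ) F = l t₀ := by
      intro t₀
      rw [hcoeffF]
      have hcong : ∀ t ∈ l.support,
          (if (↑t : Fin n →₀ ℕ) = ↑t₀ then l t else 0) = (if t = t₀ then l t else 0) :=
        fun t _ => if_congr Subtype.coe_inj rfl rfl
      rw [Finset.sum_congr rfl hcong, Finset.sum_ite_eq' l.support t₀ (fun t => l t)]
      by_cases h : t₀ ∈ l.support
      · rw [if_pos h]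
      · rw [if_neg h]; exact (Finsupp.notMem_support_iff.mp h).symm
    have hFout : ∀ m, m ∉ O → coeff m F = 0 := by
      intro m hm
      rw [hcoeffF]
      refine Finset.sum_eq_zero fun t _ => ?_
      refine if_neg fun h : (↑t : Fin n →₀ ℕ) = m => hm (h ▸ t.2)
    have hFJ : F ∈ J := by
      have h1 : Ideal.Quotient.mk J F = 0 := by
        rw [hF, map_finsuppSum, ← hl, Finsupp.linearCombination_apply]
        refine Finsupp.sum_congr fun t _ => ?_
        rw [← smul_mk, MvPolynomial.smul_monomial, smul_eq_mul, mul_one]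
      exact Ideal.Quotient.eq_zero_iff_mem.mp h1
    have hrange : {p : MvPolynomial (Fin n) (Polynomial K) | ∃ b ∈ borderSet n O,
        p = monomial b 1 - ∑ t ∈ O, MvPolynomial.C (Polynomial.C (c b t) * Polynomial.X) *
          monomial t 1}
        = Set.range (fun b : ↥(borderSet n O) =>
            (monomial (↑b) 1 - ∑ t ∈ O, MvPolynomial.C (Polynomial.C (c (↑b) t) *
              Polynomial.X) * monomial t 1 : MvPolynomial (Fin n) (Polynomial K))) := by
      ext p
      constructor
      · rintro ⟨b, hb, rfl⟩; exact ⟨⟨b, hb⟩, rfl⟩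
      · rintro ⟨⟨b, hb⟩, rfl⟩; exact ⟨b, hb, rfl⟩
    obtain ⟨q, hq⟩ : ∃ q : ↥(borderSet n O) → MvPolynomial (Fin n) (Polynomial K),
        (∑ b : ↥(borderSet n O), q b * (monomial (↑b) 1 -
          ∑ t ∈ O, MvPolynomial.C (Polynomial.C (c (↑b) t) * Polynomial.X) * monomial t 1)) = F := by
      have hmemJ := hFJ
      rw [hJ, hrange] at hmemJ
      obtain ⟨q, hqq⟩ := (Submodule.mem_span_range_iff_exists_fun _).mp hmemJ
      exact ⟨q, by simpa [smul_eq_mul] using hqq⟩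
    have hco : ∀ m : Fin n →₀ ℕ, (∀ b ∈ borderSet n O, degW n w m ≤ degW n w b) →
        coeff m F = ∑ b : ↥(borderSet n O), coeff 0 (q b) *
          coeff m (monomial (↑b) 1 - ∑ t ∈ O, MvPolynomial.C (Polynomial.C (c (↑b) t) *
            Polynomial.X) * monomial t 1 : MvPolynomial (Fin n) (Polynomial K)) := by
      intro m hm
      rw [← hq, coeff_sum]
      refine Finset.sum_congr rfl fun b _ => ?_
      exact coeff_mul_gen w hw O (borderSet_not_mem b.2) _
        (fun v hv hne => hγ (↑b) b.2 v hv hne) (q b) (hm (↑b) b.2)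
    refine Finsupp.ext fun t₀ => ?_
    have hvalid : ∀ m : Fin n →₀ ℕ, degW n w m = degW n w (↑t₀ : Fin n →₀ ℕ) →
        (∀ b ∈ borderSet n O, degW n w m ≤ degW n w b) := by
      intro m hm b hb; rw [hm]; exact hmax (↑t₀) t₀.2 b hb
    have hα : ∀ b : ↥(borderSet n O),
        degW n w (↑b : Fin n →₀ ℕ) = degW n w (↑t₀ : Fin n →₀ ℕ) → coeff 0 (q b) = 0 := by
      intro b hdb
      have h1 : coeff (↑b : Fin n →₀ ℕ) F = 0 := hFout (↑b) (borderSet_not_mem b.2)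
      rw [hco (↑b) (hvalid (↑b) hdb)] at h1
      have h2 : ∀ b' : ↥(borderSet n O),
          coeff (↑b : Fin n →₀ ℕ) (monomial (↑b') 1 - ∑ t ∈ O,
            MvPolynomial.C (Polynomial.C (c (↑b') t) * Polynomial.X) * monomial t 1 :
              MvPolynomial (Fin n) (Polynomial K))
          = if (↑b' : Fin n →₀ ℕ) = ↑b then 1 else 0 := by
        intro b'
        rw [coeff_gen O (borderSet_not_mem b'.2) _ (↑b), if_neg (borderSet_not_mem b.2),
          sub_zero]
      have h3 : ∀ b' : ↥(borderSet n O), ((↑b' : Fin n →₀ ℕ) = ↑b) = (b' = b) :=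
        fun b' => propext Subtype.coe_inj
      simp_rw [h2, h3, mul_ite, mul_one, mul_zero] at h1
      rw [Finset.sum_ite_eq' Finset.univ b (fun b' => coeff 0 (q b')),
        if_pos (Finset.mem_univ b)] at h1
      exact h1
    have h4 : coeff (↑t₀ : Fin n →₀ ℕ) F = 0 := by
      rw [hco (↑t₀) (hvalid (↑t₀) rfl)]
      refine Finset.sum_eq_zero fun b _ => ?_
      by_cases hdb : degW n w (↑b : Fin n →₀ ℕ) = degW n w (↑t₀ : Fin n →₀ ℕ)
      · rw [hα b hdb, zero_mul]
      · rw [coeff_gen O (borderSet_not_mem b.2) _ (↑t₀),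
          if_neg (fun h : (↑b : Fin n →₀ ℕ) = ↑t₀ => (borderSet_not_mem b.2) (h.symm ▸ t₀.2)), if_pos t₀.2,
          hγ (↑b) b.2 (↑t₀) t₀.2 (fun h => hdb h.symm)]
        simp
    rw [Finsupp.zero_apply, ← hFt t₀, h4]
  · -- spanning
    rw [eq_top_iff]
    rintro x -
    obtain ⟨f, rfl⟩ := Ideal.Quotient.mk_surjective x
    rw [← support_sum_monomial_coeff f, map_sum]
    refine Submodule.sum_mem _ fun m hm => ?_
    have h3 : (monomial m (coeff m f) : MvPolynomial (Fin n) (Polynomial K))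
        = (coeff m f) • monomial m 1 := by
      rw [MvPolynomial.smul_monomial, smul_eq_mul, mul_one]
    rw [h3, smul_mk]
    refine Submodule.smul_mem _ _ ?_
    have h2 : (monomial (0 + m) 1 : MvPolynomial (Fin n) (Polynomial K)) ∈
        (Ideal.span {p : MvPolynomial (Fin n) (Polynomial K) | ∃ b ∈ borderSet n O,
          p = monomial b 1 - ∑ t ∈ O, MvPolynomial.C (Polynomial.C (c b t) * Polynomial.X) *
            monomial t 1}).restrictScalars (Polynomial K) ⊔
        Submodule.span (Polynomial K)
          {p : MvPolynomial (Fin n) (Polynomial K) | ∃ t ∈ O, p = monomial t 1} :=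
      red O (fun b t => Polynomial.C (c b t) * Polynomial.X) (∑ i, m i) m 0 rfl h0
    rw [zero_add] at h2
    obtain ⟨j, hj, v, hv, hsum⟩ := Submodule.mem_sup.mp h2
    have hjJ : j ∈ J := by rw [hJ]; exact hj
    rw [← hsum, map_add, Ideal.Quotient.eq_zero_iff_mem.mpr hjJ, zero_add]
    have h5 : Ideal.Quotient.mk J v ∈ Submodule.map
        (Ideal.Quotient.mkₐ (Polynomial K) J).toLinearMap
        (Submodule.span (Polynomial K)
          {p : MvPolynomial (Fin n) (Polynomial K) | ∃ t ∈ O, p = monomial t 1}) :=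
      ⟨v, hv, by simp [Ideal.Quotient.mkₐ_eq_mk]⟩
    rw [Submodule.map_span] at h5
    refine Submodule.span_mono ?_ h5
    rintro p ⟨p', ⟨t, ht, rfl⟩, rfl⟩
    exact ⟨⟨t, ht⟩, by simp [Ideal.Quotient.mkₐ_eq_mk]⟩
  · -- specialization z ↦ 1
    rw [hJ, Ideal.map_span]
    have himg : (MvPolynomial.map (Polynomial.evalRingHom (1 : K))) ''
        {p : MvPolynomial (Fin n) (Polynomial K) | ∃ b ∈ borderSet n O,
          p = monomial b 1 - ∑ t ∈ O, MvPolynomial.C (Polynomial.C (c b t) * Polynomial.X) *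
            monomial t 1}
        = {p : MvPolynomial (Fin n) K | ∃ b ∈ borderSet n O,
            p = monomial b 1 - ∑ t ∈ O, MvPolynomial.C (c b t) * monomial t 1} := by
      ext p
      simp only [Set.mem_image, Set.mem_setOf_eq]
      constructor
      · rintro ⟨p', ⟨b, hb, rfl⟩, rfl⟩
        exact ⟨b, hb, (mapkg1 b)⟩
      · rintro ⟨b, hb, rfl⟩
        exact ⟨_, ⟨b, hb, rfl⟩, mapkg1 b⟩
    rw [himg]
    have hle : Ideal.span {p : MvPolynomial (Fin n) K | ∃ b ∈ borderSet n O,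
        p = monomial b 1 - ∑ t ∈ O, MvPolynomial.C (c b t) * monomial t 1} ≤ I := by
      rw [Ideal.span_le]
      rintro p ⟨b, hb, rfl⟩
      exact hmem b hb
    refine le_antisymm hle ?_
    intro f hf
    have h2 := mem_sup_all O h0 c f
    obtain ⟨j, hj, v, hv, hsum⟩ := Submodule.mem_sup.mp h2
    have hjG : j ∈ Ideal.span {p : MvPolynomial (Fin n) K | ∃ b ∈ borderSet n O,
        p = monomial b 1 - ∑ t ∈ O, MvPolynomial.C (c b t) * monomial t 1} := hj
    have hvI : v ∈ Submodule.restrictScalars K I := by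
      have hveq : v = f - j := by rw [← hsum]; ring
      rw [hveq]
      exact Submodule.sub_mem _ hf (hle hjG)
    have hv0 : v = 0 := Submodule.disjoint_def.mp hcompl.disjoint v hvI hv
    rw [← hsum, hv0, add_zero]
    exact hjG
  · -- specialization z ↦ 0
    rw [hJ, Ideal.map_span]
    congr 1
    ext p
    simp only [Set.mem_image, Set.mem_setOf_eq]
    constructor
    · rintro ⟨p', ⟨b, hb, rfl⟩, rfl⟩
      exact ⟨b, hb, mapkg0 b⟩
    · rintro ⟨b, hb, rfl⟩
      exact ⟨_, ⟨b, hb, rfl⟩, mapkg0 b⟩
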